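/- Let K and M be two compact sets in ℝ^{n₀} that are strictly separable by a linear hyperplane, i.e. there exist v ∈ ℝ^{n₀} with ‖v‖ = 1 and q ∈ ℝ such that vᵀx > q for all x ∈ K and vᵀx < q for all x ∈ M. Then for every ε > 0 there exists a network function F ∈ NN_ReLU^{n₀}(n₀, 2), i.e. F(x) = V ReLU(Wx + b) + d with W, V ∈ ℝ^{n₀×n₀}, b, d ∈ ℝ^{n₀}, such that F maps all of K to a single vector p ∈ ℝ^{n₀} ∖ M, F(x) = x for all x ∈ M, and min_{x∈K} ‖p − x‖ < ε. -/

import Mathlib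

noncomputable section

/-- The rectified linear unit. -/
def ReLU (t : ℝ) : ℝ := max t 0

set_option maxHeartbeats 2000000 in
/-- If the compact sets `K` and `M` are strictly separated by a linear
hyperplane, then for every `ε > 0` there is a two-layer ReLU network
`F x = V ReLU(W x + b) + d` of width `n₀` that collapses `K` to a single point
`p ∉ M`, is the identity on `M`, and satisfies `min_{x ∈ K} ‖p - x‖ < ε`. -/
theorem collapse_separated_compact_set
    (n₀ : ℕ) (K M : Set (EuclideanSpace ℝ (Fin n₀)))
    (hK : IsCompact K) (hM : IsCompact M)
    (v : EuclideanSpace ℝ (Fin n₀)) (q : ℝ) (hv : ‖v‖ = 1)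
    (hsepK : ∀ x ∈ K, q < dotProduct v x)
    (hsepM : ∀ x ∈ M, dotProduct v x < q)
    (ε : ℝ) (hε : 0 < ε) :
    ∃ (W V : Matrix (Fin n₀) (Fin n₀) ℝ) (b d : Fin n₀ → ℝ)
      (p : EuclideanSpace ℝ (Fin n₀)),
      (∀ x ∈ K, (WithLp.toLp 2 (V.mulVec (fun i => ReLU (W.mulVec x i + b i)) + d)
          : EuclideanSpace ℝ (Fin n₀)) = p) ∧
      (∀ x ∈ M, (WithLp.toLp 2 (V.mulVec (fun i => ReLU (W.mulVec x i + b i)) + d)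
          : EuclideanSpace ℝ (Fin n₀)) = x) ∧
      p ∉ M ∧ Metric.infDist p K < ε := by
  classical
  -- inner product equals dot product
  have hdot : ∀ x y : EuclideanSpace ℝ (Fin n₀),
      (inner ℝ x y : ℝ) = dotProduct x y := by
    intro x y
    simp [PiLp.inner_apply, RCLike.inner_apply, dotProduct, mul_comm]
  have hinner : ∀ u : EuclideanSpace ℝ (Fin n₀), |dotProduct v u| ≤ ‖u‖ := by
    intro u
    have h := abs_real_inner_le_norm v u
    rw [hdot, hv, one_mul] at h
    exact h
  have hcoord : ∀ (x : EuclideanSpace ℝ (Fin n₀)) (i : Fin n₀), |x i| ≤ ‖x‖ := by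
    intro x i
    rw [EuclideanSpace.norm_eq]
    have h1 : |x i| = Real.sqrt (‖x i‖ ^ 2) := by
      rw [Real.sqrt_sq_eq_abs]
      simp [Real.norm_eq_abs, abs_abs]
    rw [h1]
    apply Real.sqrt_le_sqrt
    exact Finset.single_le_sum (fun j _ => sq_nonneg ‖x j‖) (Finset.mem_univ i)
  have hv0 : v ≠ 0 := fun h => by simp [h] at hv
  obtain ⟨i₀, hi₀⟩ : ∃ i, v i ≠ 0 := by
    by_contra h
    push_neg at h
    exact hv0 (by ext i; exact h i)
  -- choose a direction w with all coordinates ≥ 1 and v ⬝ w ≠ 0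
  obtain ⟨w, hw1, ha⟩ : ∃ w : EuclideanSpace ℝ (Fin n₀),
      (∀ i, 1 ≤ w i) ∧ dotProduct v w ≠ 0 := by
    by_cases hS : dotProduct v (fun _ => 1) = 0
    · refine ⟨WithLp.toLp 2 (fun i => if i = i₀ then 2 else 1), fun i => by dsimp; split <;> norm_num, ?_⟩
      have e : ∀ i, v i * (if i = i₀ then (2:ℝ) else 1)
          = v i * 1 + (if i = i₀ then v i else 0) := by
        intro i; split <;> ring
      have h2 : dotProduct v (fun i => if i = i₀ then (2:ℝ) else 1)
          = dotProduct v (fun _ => 1) + v i₀ := by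
        simp only [dotProduct]
        rw [Finset.sum_congr rfl (fun i _ => e i), Finset.sum_add_distrib]
        simp
      rw [h2, hS, zero_add]
      exact hi₀
    · exact ⟨WithLp.toLp 2 (fun _ => 1), fun _ => le_rfl, hS⟩
  -- choose x₀ minimizing v ⬝ x on K (or a default point if K = ∅)
  obtain ⟨x₀, hx₀K, hx₀q, hx₀min⟩ : ∃ x₀ : EuclideanSpace ℝ (Fin n₀),
      (K.Nonempty → x₀ ∈ K) ∧ q < dotProduct v x₀ ∧
      ∀ x ∈ K, dotProduct v x₀ ≤ dotProduct v x := by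
    rcases K.eq_empty_or_nonempty with hKe | hKne
    · refine ⟨(q + 1) • v, fun h => absurd (h.ne_empty hKe) (fun h' => h'), ?_,
        by simp [hKe]⟩
      have h3 : (∑ i, v i * v i) = 1 := by
        have h4 : (inner ℝ v v : ℝ) = 1 := by
          rw [real_inner_self_eq_norm_sq, hv]; norm_num
        rw [hdot] at h4
        simpa [dotProduct] using h4
      have h2 : dotProduct v (WithLp.ofLp ((q + 1) • v)) = (q + 1) * ∑ i, v i * v i := by
        simp only [dotProduct, WithLp.ofLp_smul, Pi.smul_apply, PiLp.smul_apply, smul_eq_mul, Finset.mul_sum]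
        exact Finset.sum_congr rfl (fun i _ => by ring)
      rw [h2, h3]
      linarith
    · have hcont : Continuous fun x : EuclideanSpace ℝ (Fin n₀) => dotProduct v x := by
        have h5 : (fun x : EuclideanSpace ℝ (Fin n₀) => dotProduct v x)
            = fun x => (inner ℝ v x : ℝ) := by
          funext x; rw [hdot]
        rw [h5]
        exact Continuous.inner continuous_const continuous_id
      obtain ⟨x₀, hx₀, hmin⟩ := hK.exists_isMinOn hKne hcont.continuousOn
      exact ⟨x₀, fun _ => hx₀, hsepK x₀ hx₀, fun x hx => hmin hx⟩
  -- bounds for K and M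
  obtain ⟨CK, hCK0, hCKx₀, hCKK⟩ : ∃ C : ℝ, 0 ≤ C ∧ ‖x₀‖ ≤ C ∧ ∀ x ∈ K, ‖x‖ ≤ C := by
    obtain ⟨C₀, hC₀⟩ := hK.isBounded.exists_norm_le
    exact ⟨max C₀ ‖x₀‖, le_trans (norm_nonneg x₀) (le_max_right _ _), le_max_right _ _,
      fun x hx => le_trans (hC₀ x hx) (le_max_left _ _)⟩
  obtain ⟨CM, hCM0, hCMM⟩ : ∃ C : ℝ, 0 ≤ C ∧ ∀ x ∈ M, ‖x‖ ≤ C := by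
    obtain ⟨C₀, hC₀⟩ := hM.isBounded.exists_norm_le
    exact ⟨max C₀ 0, le_max_right _ _, fun x hx => le_trans (hC₀ x hx) (le_max_left _ _)⟩
  set δ := dotProduct v x₀ - q with hδdef
  have hδ : 0 < δ := by rw [hδdef]; linarith
  clear_value δ
  set c := 2 * CK with hcdef
  have hc0 : 0 ≤ c := by positivity
  set D := min ε δ with hDdef
  have hD : 0 < D := lt_min hε hδ
  have hDε : D ≤ ε := min_le_left _ _
  have hDδ : D ≤ δ := min_le_right _ _
  set a := dotProduct v w with hadef
  have hnw : 0 ≤ ‖w‖ := norm_nonneg _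
  have haw : |a| ≤ ‖w‖ := hinner w
  have ha0 : 0 < |a| := abs_pos.mpr ha
  have hcwD : 0 ≤ c * ‖w‖ / D := by positivity
  clear_value c D a
  obtain ⟨t, ht0, ht1, ht2⟩ : ∃ t : ℝ, 0 < t ∧ 2 + c * ‖w‖ / D ≤ t * |a| ∧
      c + CK + CM ≤ t * δ := by
    refine ⟨max ((2 + c * ‖w‖ / D) / |a|) ((c + CK + CM) / δ), ?_, ?_, ?_⟩
    · have : 0 < (2 + c * ‖w‖ / D) / |a| := by positivity
      exact lt_of_lt_of_le this (le_max_left _ _)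
    · rw [← div_le_iff₀ ha0]
      exact le_max_left _ _
    · rw [← div_le_iff₀ hδ]
      exact le_max_right _ _
  have habs : 1 + c * ‖w‖ / D ≤ |1 - t * a| := by
    have h1 : |t * a| - |(1:ℝ)| ≤ |t * a - 1| := abs_sub_abs_le_abs_sub _ _
    rw [abs_sub_comm] at h1
    have h2 : |t * a| = t * |a| := by rw [abs_mul, abs_of_nonneg ht0.le]
    rw [h2, abs_one] at h1
    linarith
  have habs0 : 0 < |1 - t * a| := by nlinarith
  have hta0 : 1 - t * a ≠ 0 := by
    intro h
    rw [h, abs_zero] at habs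
    nlinarith
  set s := c / (1 - t * a) with hsdef
  set r := t / (1 - t * a) with hrdef
  have hr : r * (1 - t * a) = t := div_mul_cancel₀ _ hta0
  have hs : s * (1 - t * a) = c := div_mul_cancel₀ _ hta0
  clear_value s r
  have hsD : |s| * ‖w‖ < D := by
    have h1 : |s| = c / |1 - t * a| := by rw [hsdef, abs_div, abs_of_nonneg hc0]
    rw [h1, div_mul_eq_mul_div, div_lt_iff₀ habs0]
    have h2 : D * (1 + c * ‖w‖ / D) ≤ D * |1 - t * a| :=
      mul_le_mul_of_nonneg_left habs hD.le
    have h3 : D * (1 + c * ‖w‖ / D) = D + c * ‖w‖ := by field_simp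
    nlinarith
  -- the network
  set b : Fin n₀ → ℝ :=
    fun i => t * w i * dotProduct v x₀ - x₀ i - c * w i with hbdef
  set W : Matrix (Fin n₀) (Fin n₀) ℝ :=
    Matrix.of fun i j => (if i = j then (1:ℝ) else 0) - t * w i * v j with hWdef
  set V : Matrix (Fin n₀) (Fin n₀) ℝ :=
    Matrix.of fun i j => (if i = j then (1:ℝ) else 0) + r * w i * v j with hVdef
  clear_value b W V
  have hWmul : ∀ (x : Fin n₀ → ℝ) (i : Fin n₀),
      W.mulVec x i = x i - t * w i * dotProduct v x := by
    intro x i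
    simp only [hWdef, Matrix.mulVec, dotProduct, Matrix.of_apply, sub_mul,
      ite_mul, one_mul, zero_mul]
    rw [Finset.sum_sub_distrib]
    have e1 : (∑ j, if i = j then x j else 0) = x i := by simp
    have e2 : (∑ j, t * w i * v j * x j) = t * w i * ∑ j, v j * x j := by
      rw [Finset.mul_sum]
      exact Finset.sum_congr rfl (fun j _ => by ring)
    rw [e1, e2]
  have hVmul : ∀ (x : Fin n₀ → ℝ) (i : Fin n₀),
      V.mulVec x i = x i + r * w i * dotProduct v x := by
    intro x i
    simp only [hVdef, Matrix.mulVec, dotProduct, Matrix.of_apply, add_mul,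
      ite_mul, one_mul, zero_mul]
    rw [Finset.sum_add_distrib]
    have e1 : (∑ j, if i = j then x j else 0) = x i := by simp
    have e2 : (∑ j, r * w i * v j * x j) = r * w i * ∑ j, v j * x j := by
      rw [Finset.mul_sum]
      exact Finset.sum_congr rfl (fun j _ => by ring)
    rw [e1, e2]
  have hdW : ∀ x : Fin n₀ → ℝ,
      dotProduct v (W.mulVec x) = (1 - t * a) * dotProduct v x := by
    intro x
    have e : ∀ i, v i * W.mulVec x i
        = v i * x i - t * (v i * w i) * dotProduct v x := by
      intro i; rw [hWmul]; ring
    calc dotProduct v (W.mulVec x) = ∑ i, v i * W.mulVec x i := rfl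
      _ = ∑ i, (v i * x i - t * (v i * w i) * dotProduct v x) :=
          Finset.sum_congr rfl (fun i _ => e i)
      _ = (∑ i, v i * x i) - t * (∑ i, v i * w i) * dotProduct v x := by
          rw [Finset.sum_sub_distrib]
          congr 1
          rw [Finset.mul_sum, Finset.sum_mul]
      _ = (1 - t * a) * dotProduct v x := by
          simp only [hadef, dotProduct]
          ring
  have hinv : ∀ (x : Fin n₀ → ℝ) (i : Fin n₀), V.mulVec (W.mulVec x) i = x i := by
    intro x i
    rw [hVmul, hWmul, hdW]
    have h1 : r * w i * ((1 - t * a) * dotProduct v x)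
        = t * w i * dotProduct v x := by
      rw [show r * w i * ((1 - t * a) * dotProduct v x)
          = r * (1 - t * a) * (w i * dotProduct v x) by ring, hr]
      ring
    rw [h1]
    ring
  set p : EuclideanSpace ℝ (Fin n₀) := WithLp.toLp 2 (fun i => x₀ i + s * w i) with hpdef
  clear_value p
  have hdp : dotProduct v p = dotProduct v x₀ + s * a := by
    simp only [hpdef, hadef, dotProduct, Finset.mul_sum]
    rw [← Finset.sum_add_distrib]
    exact Finset.sum_congr rfl (fun i _ => by ring)
  have hpre : ∀ i, W.mulVec (p : Fin n₀ → ℝ) i + b i = 0 := by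
    intro i
    rw [hWmul, hdp]
    simp only [hbdef, hpdef]
    linear_combination (w i) * hs
  have hVb : ∀ i, V.mulVec b i = -(p i) := by
    intro i
    have h1 : W.mulVec (p : Fin n₀ → ℝ) = -b := by
      funext j
      have := hpre j
      simp only [Pi.neg_apply]
      linarith
    have h2 := hinv p i
    rw [h1, Matrix.mulVec_neg, Pi.neg_apply] at h2
    linarith
  have hbM : ∀ x ∈ M, ∀ i, 0 ≤ W.mulVec (x : Fin n₀ → ℝ) i + b i := by
    intro x hx i
    rw [hWmul]
    simp only [hbdef]
    have h1 : dotProduct v x < q := hsepM x hx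
    have h2 := abs_le.mp (le_trans (hcoord x i) (hCMM x hx))
    have h3 := abs_le.mp (le_trans (hcoord x₀ i) hCKx₀)
    have h4 : (1:ℝ) ≤ w i := hw1 i
    have h5 : δ ≤ dotProduct v x₀ - dotProduct v x := by
      rw [hδdef]; linarith
    have h6 : CK + CM ≤ t * (dotProduct v x₀ - dotProduct v x) - c := by
      linarith [mul_le_mul_of_nonneg_left h5 ht0.le, ht2]
    have h7 : CK + CM ≤ w i * (t * (dotProduct v x₀ - dotProduct v x) - c) := by
      nlinarith [mul_nonneg (by linarith : (0:ℝ) ≤ w i - 1) (by linarith :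
        (0:ℝ) ≤ t * (dotProduct v x₀ - dotProduct v x) - c)]
    nlinarith [h7, h2.1, h3.2]
  have hbK : ∀ x ∈ K, ∀ i, W.mulVec (x : Fin n₀ → ℝ) i + b i ≤ 0 := by
    intro x hx i
    rw [hWmul]
    simp only [hbdef]
    have h2 := abs_le.mp (le_trans (hcoord x i) (hCKK x hx))
    have h3 := abs_le.mp (le_trans (hcoord x₀ i) hCKx₀)
    have h4 : (1:ℝ) ≤ w i := hw1 i
    have h5 : dotProduct v x₀ ≤ dotProduct v x := hx₀min x hx
    have h6 : w i * (t * (dotProduct v x₀ - dotProduct v x)) ≤ 0 :=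
      mul_nonpos_of_nonneg_of_nonpos (by linarith)
        (mul_nonpos_of_nonneg_of_nonpos ht0.le (by linarith))
    have h7 : c ≤ w i * c := by nlinarith
    nlinarith [h2.2, h3.1]
  refine ⟨W, V, b, p, p, ?_, ?_, ?_, ?_⟩
  · -- K collapses to p
    intro x hx
    have hz : (fun i => ReLU (W.mulVec x i + b i)) = (fun _ => (0:ℝ)) := by
      funext i
      simp only [ReLU]
      exact max_eq_right (hbK x hx i)
    rw [hz]
    have hz2 : V.mulVec (fun _ => (0:ℝ)) = (fun _ => (0:ℝ)) := by
      funext i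
      simp [Matrix.mulVec, dotProduct]
    rw [hz2]
    ext i
    exact zero_add (p i)
  · -- identity on M
    intro x hx
    have hz : (fun i => ReLU (W.mulVec x i + b i))
        = W.mulVec (x : Fin n₀ → ℝ) + b := by
      funext i
      simp only [ReLU, Pi.add_apply]
      exact max_eq_left (hbM x hx i)
    rw [hz]
    ext i
    show V.mulVec (W.mulVec (x : Fin n₀ → ℝ) + b) i + p i = x i
    rw [Matrix.mulVec_add]
    have h2 := hinv x i
    have h3 := hVb i
    show V.mulVec (W.mulVec (x : Fin n₀ → ℝ)) i + V.mulVec b i + p i = x i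
    rw [h2, h3]
    ring
  · -- p ∉ M
    intro hpM
    have h1 : dotProduct v p < q := hsepM p hpM
    have h2 : |s * a| < δ := by
      have h3 : |s * a| ≤ |s| * ‖w‖ := by
        rw [abs_mul]
        exact mul_le_mul_of_nonneg_left haw (abs_nonneg s)
      exact lt_of_le_of_lt h3 (lt_of_lt_of_le hsD hDδ)
    have h4 := (abs_lt.mp h2).1
    rw [hdp] at h1
    rw [hδdef] at h4
    linarith
  · -- infDist p K < ε
    rcases K.eq_empty_or_nonempty with hKe | hKne
    · rw [hKe]
      simpa [Metric.infDist_empty] using hε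
    · have hx₀ := hx₀K hKne
      have h1 : Metric.infDist p K ≤ dist p x₀ := Metric.infDist_le_dist_of_mem hx₀
      have h2 : dist p x₀ = ‖s • w‖ := by
        rw [dist_eq_norm]
        congr 1
        ext i
        show p i - x₀ i = s * w i
        simp only [hpdef, PiLp.toLp_apply]
        ring
      rw [h2, norm_smul, Real.norm_eq_abs] at h1
      exact lt_of_le_of_lt h1 (lt_of_lt_of_le hsD hDε)
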